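/- Let p > 1 be an integer and X a finite set of distinct non-negative integers that is non-terminal, i.e., λ(X) is nonempty. Let M = ord(X) be the minimal L with t_L(X) ≠ 0 in the p-core tower row sizes. Then X has an option Y = X ∪ {x − p^M} \ {x} (a legal single-hook removal of a p^M-hook) such that t_L(Y) ≡ t_L(X) − 1 (mod p) for L = M and t_{≥M+1}(Y) ⪰ t_{≥M+1}(X) in the order comparing sequences from the highest differing index (a 'p^*-option' exists). -/

import Mathlib

/-- `hL p L X` is the number of hooks of `λ(X)` with length divisible by `p^L`. -/
def hL (p L : ℕ) (X : Finset ℕ) : ℕ :=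
  ∑ x ∈ X, ((Finset.range x).filter fun y => y ∉ X ∧ p ^ L ∣ x - y).card

/-- `t_L(X) = h_L(X) - p h_{L+1}(X)`, the total size of the `L`-th row of the
`p`-core tower (a genuine natural number). -/
def tN (p L : ℕ) (X : Finset ℕ) : ℕ := hL p L X - p * hL p (L + 1) X

/-- `f ⪰ g`: either `f = g`, or `f > g` at the largest index where they differ. -/
def Succeq (f g : ℕ → ℕ) : Prop :=
  f = g ∨ ∃ N, g N < f N ∧ ∀ L, N < L → f L = g L

namespace S14
open Finset

def EE (p L : ℕ) (X : Finset ℕ) (v : ℕ) : ℕ :=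
  ((Finset.range v).filter fun y => y ∉ X ∧ p ^ L ∣ v - y).card
def CC (p L : ℕ) (X : Finset ℕ) (v : ℕ) : ℕ :=
  (X.filter fun z => v < z ∧ p ^ L ∣ z - v).card
def nn (p L : ℕ) (X : Finset ℕ) (v : ℕ) : ℕ :=
  (X.filter fun z => z % p ^ L = v % p ^ L).card
def BB (p L : ℕ) (X : Finset ℕ) (v : ℕ) : ℕ :=
  (X.filter fun z => z < v ∧ p ^ L ∣ v - z).card
def ind (p L d v : ℕ) : ℕ := if v % p ^ L < d then 1 else 0
def QQ (p L d : ℕ) (X : Finset ℕ) (c : ℕ) : Prop :=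
  nn p L X (c + (p ^ L - d)) + 1 + ind p L d c ≤ nn p L X c
def PP (p L : ℕ) (X : Finset ℕ) : ℕ := ∑ x ∈ X, BB p L X x
def pairs (S : Finset ℕ) : ℕ := ∑ x ∈ S, (S.filter (· < x)).card
def cls (p L : ℕ) (X : Finset ℕ) (c : ℕ) : Finset ℕ := X.filter (fun z => z % p ^ L = c)

variable {p : ℕ}

lemma ppos (hp : 1 < p) (L : ℕ) : 0 < p ^ L := pow_pos (by omega) L

lemma hL_eq (p L : ℕ) (X : Finset ℕ) : hL p L X = ∑ x ∈ X, EE p L X x := rfl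

lemma nn_congr (p L : ℕ) (X : Finset ℕ) {v w : ℕ} (h : v % p ^ L = w % p ^ L) :
    nn p L X v = nn p L X w := by unfold nn; rw [h]

lemma card_filter_dvd (m v : ℕ) (hm : 0 < m) :
    ((Finset.range v).filter fun y => m ∣ v - y).card = v / m := by
  rw [← Finset.card_range (v / m)]
  apply Finset.card_bij' (fun y _ => (v - y) / m - 1) (fun j _ => v - (j + 1) * m)
  · intro y hy
    simp only [mem_filter, mem_range] at hy
    obtain ⟨hlt, k, hk⟩ := hy
    have hk' : v - y = k * m := by rw [hk, Nat.mul_comm]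
    have hk1 : 1 ≤ k := by
      rcases Nat.eq_zero_or_pos k with rfl | h
      · simp at hk'; omega
      · exact h
    have hdf : (v - y) / m = k := by rw [hk', Nat.mul_div_cancel _ hm]
    have hkv : k ≤ v / m := (Nat.le_div_iff_mul_le hm).2 (by omega)
    simp only [mem_range]
    omega
  · intro j hj
    simp only [mem_range] at hj
    have hjm : (j + 1) * m ≤ v := (Nat.le_div_iff_mul_le hm).1 (by omega)
    have he : (j + 1) * m = j * m + m := by ring
    have he2 : m * (j + 1) = (j + 1) * m := by ring
    simp only [mem_filter, mem_range]
    exact ⟨by omega, ⟨j + 1, by omega⟩⟩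
  · intro y hy
    simp only [mem_filter, mem_range] at hy
    obtain ⟨hlt, k, hk⟩ := hy
    have hk' : v - y = k * m := by rw [hk, Nat.mul_comm]
    have hk1 : 1 ≤ k := by
      rcases Nat.eq_zero_or_pos k with rfl | h
      · simp at hk'; omega
      · exact h
    rw [hk', Nat.mul_div_cancel _ hm]
    have h2 : k - 1 + 1 = k := by omega
    rw [h2]
    omega
  · intro j hj
    simp only [mem_range] at hj
    have hjm : (j + 1) * m ≤ v := (Nat.le_div_iff_mul_le hm).1 (by omega)
    have he : (j + 1) * m = j * m + m := by ring
    have h3 : v - (v - (j + 1) * m) = (j + 1) * m := by omega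
    rw [h3, Nat.mul_div_cancel _ hm]; omega

lemma EE_add_BB (hp : 1 < p) (L : ℕ) (X : Finset ℕ) (v : ℕ) :
    EE p L X v + BB p L X v = v / p ^ L := by
  classical
  have h1 : X.filter (fun z => z < v ∧ p ^ L ∣ v - z) =
      ((Finset.range v).filter fun y => p ^ L ∣ v - y).filter (fun y => ¬ y ∉ X) := by
    ext z; simp only [mem_filter, mem_range, not_not]; tauto
  have h2 : ((Finset.range v).filter fun y => y ∉ X ∧ p ^ L ∣ v - y) =
      ((Finset.range v).filter fun y => p ^ L ∣ v - y).filter (fun y => y ∉ X) := by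
    ext z; simp only [mem_filter, mem_range]; tauto
  unfold EE BB
  rw [h1, h2, Finset.card_filter_add_card_filter_not,
    card_filter_dvd (p ^ L) v (ppos hp L)]

/-- n = B + self + C -/

lemma nn_split (L : ℕ) (X : Finset ℕ) (v : ℕ) :
    nn p L X v = BB p L X v + (if v ∈ X then 1 else 0) + CC p L X v := by
  classical
  unfold nn BB CC
  rw [Finset.card_filter, Finset.card_filter, Finset.card_filter]
  have key : ∀ z, (if z % p ^ L = v % p ^ L then (1:ℕ) else 0) =
      ((if z < v ∧ p ^ L ∣ v - z then (1:ℕ) else 0) +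
        (if z = v then 1 else 0)) + (if v < z ∧ p ^ L ∣ z - v then 1 else 0) := by
    intro z
    rcases Nat.lt_trichotomy z v with h | h | h
    · have e1 : (z % p ^ L = v % p ^ L) ↔ p ^ L ∣ v - z := Nat.modEq_iff_dvd' (by omega)
      have hne : z ≠ v := by omega
      have hnlt : ¬ v < z := by omega
      by_cases hd : p ^ L ∣ v - z <;> simp [e1, hd, h, hne, hnlt]
    · subst h; simp
    · have e1 : (z % p ^ L = v % p ^ L) ↔ p ^ L ∣ z - v :=
        ⟨fun hh => (Nat.modEq_iff_dvd' (by omega)).1 hh.symm,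
         fun hh => ((Nat.modEq_iff_dvd' (by omega)).2 hh).symm⟩
      have hne : z ≠ v := by omega
      have hnlt : ¬ z < v := by omega
      by_cases hd : p ^ L ∣ z - v <;> simp [e1, hd, h, hne, hnlt]
  rw [Finset.sum_congr rfl (fun z _ => key z), Finset.sum_add_distrib, Finset.sum_add_distrib]
  congr 1
  congr 1
  exact Finset.sum_ite_eq' X v (fun _ => (1:ℕ))

/-- charge identity in ℤ :  E - C = v/p^L - n + [v ∈ X] -/

lemma EC (hp : 1 < p) (L : ℕ) (X : Finset ℕ) (v : ℕ) :
    (EE p L X v : ℤ) - CC p L X v =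
      (v / p ^ L : ℕ) - nn p L X v + (if v ∈ X then 1 else 0) := by
  classical
  have h1 := EE_add_BB hp L X v
  have h2 := nn_split (p := p) L X v
  generalize hw : v / p ^ L = w at h1 ⊢
  by_cases hv : v ∈ X <;> simp only [hv, if_true, if_false] at h2 ⊢ <;> push_cast <;> omega

lemma EE_insert (L : ℕ) (W : Finset ℕ) (a : ℕ) (ha : a ∉ W) (x : ℕ) :
    EE p L W x = EE p L (insert a W) x + (if a < x ∧ p ^ L ∣ x - a then 1 else 0) := by
  classical
  unfold EE
  rw [Finset.card_filter, Finset.card_filter]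
  have h2 : (if a < x ∧ p ^ L ∣ x - a then (1:ℕ) else 0) =
      ∑ y ∈ Finset.range x, if y = a then (if p ^ L ∣ x - a then 1 else 0) else 0 := by
    rw [Finset.sum_ite_eq' (Finset.range x) a]
    by_cases h : a < x
    · simp [Finset.mem_range, h]
    · simp [Finset.mem_range, h]
  rw [h2, ← Finset.sum_add_distrib]
  apply Finset.sum_congr rfl
  intro y hy
  by_cases hya : y = a
  · subst hya
    simp [ha, Finset.mem_insert]
  · by_cases hyW : y ∈ W <;> simp [hya, hyW, Finset.mem_insert]

lemma EE_insert_self (L : ℕ) (W : Finset ℕ) (a : ℕ) :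
    EE p L (insert a W) a = EE p L W a := by
  unfold EE
  congr 1
  ext y
  simp only [mem_filter, mem_range, mem_insert, not_or]
  constructor
  · rintro ⟨h1, ⟨_, h2⟩, h3⟩; exact ⟨h1, h2, h3⟩
  · rintro ⟨h1, h2, h3⟩; exact ⟨h1, ⟨by omega, h2⟩, h3⟩

lemma sum_ite_CC (L : ℕ) (W : Finset ℕ) (v : ℕ) :
    ∑ x ∈ W, (if v < x ∧ p ^ L ∣ x - v then (1:ℕ) else 0) = CC p L W v :=
  (Finset.card_filter _ _).symm

/-- erase lemma -/

lemma hL_erase (L : ℕ) (X : Finset ℕ) (a : ℕ) (ha : a ∈ X) :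
    hL p L (X.erase a) + EE p L X a = hL p L X + CC p L X a := by
  classical
  have hnm : a ∉ X.erase a := Finset.notMem_erase a X
  have hins : insert a (X.erase a) = X := Finset.insert_erase ha
  have key : ∀ x, EE p L (X.erase a) x
      = EE p L X x + (if a < x ∧ p ^ L ∣ x - a then 1 else 0) := by
    intro x
    have := EE_insert (p := p) L (X.erase a) a hnm x
    rw [hins] at this
    exact this
  rw [hL_eq, hL_eq, Finset.sum_congr rfl (fun x _ => key x), Finset.sum_add_distrib]
  have h3 : ∑ x ∈ X.erase a, (if a < x ∧ p ^ L ∣ x - a then (1:ℕ) else 0) = CC p L X a := by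
    rw [← sum_ite_CC (p := p) L X a]
    apply Finset.sum_erase
    simp
  rw [h3]
  have h4 : ∑ x ∈ X.erase a, EE p L X x + EE p L X a = ∑ x ∈ X, EE p L X x :=
    Finset.sum_erase_add X _ ha
  omega

/-- insert lemma -/

lemma hL_insert (L : ℕ) (X : Finset ℕ) (b : ℕ) (hb : b ∉ X) :
    hL p L (insert b X) + CC p L X b = hL p L X + EE p L X b := by
  classical
  rw [hL_eq, hL_eq, Finset.sum_insert hb, EE_insert_self]
  have key : ∀ x, EE p L X x
      = EE p L (insert b X) x + (if b < x ∧ p ^ L ∣ x - b then 1 else 0) :=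
    EE_insert L X b hb
  rw [Finset.sum_congr rfl (fun x _ => key x), Finset.sum_add_distrib, sum_ite_CC]
  omega

/-- the main cross-move formula over ℤ. -/

lemma hL_move (L : ℕ) (X : Finset ℕ) (a b : ℕ) (ha : a ∈ X) (hb : b ∉ X) (hba : b < a) :
    (hL p L (insert b (X.erase a)) : ℤ) =
      hL p L X - EE p L X a + CC p L X a + EE p L X b - CC p L X b
        + (if p ^ L ∣ a - b then 1 else 0) := by
  classical
  have h1 := hL_erase (p := p) L X a ha
  have hb' : b ∉ X.erase a := fun h => hb (Finset.mem_of_mem_erase h)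
  have h2 := hL_insert (p := p) L (X.erase a) b hb'
  have hEE : EE p L (X.erase a) b = EE p L X b := by
    unfold EE
    congr 1
    ext y
    simp only [mem_filter, mem_range, Finset.mem_erase, not_and]
    constructor
    · rintro ⟨h1, h2, h3⟩
      refine ⟨h1, fun hyX => ?_, h3⟩
      have := h2 (by omega)
      exact this hyX
    · rintro ⟨h1, h2, h3⟩
      exact ⟨h1, fun _ h => h2 h, h3⟩
  have hCC : CC p L (X.erase a) b + (if p ^ L ∣ a - b then 1 else 0) = CC p L X b := by
    have hset : CC p L (X.erase a) b = ((X.filter fun z => b < z ∧ p ^ L ∣ z - b).erase a).card := by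
      unfold CC
      congr 1
      ext z
      simp only [Finset.mem_erase, mem_filter]
      tauto
    by_cases hd : p ^ L ∣ a - b
    · have hmem : a ∈ X.filter fun z => b < z ∧ p ^ L ∣ z - b := by
        simp only [mem_filter]; exact ⟨ha, hba, hd⟩
      rw [hset, Finset.card_erase_of_mem hmem, if_pos hd]
      unfold CC
      have : 0 < (X.filter fun z => b < z ∧ p ^ L ∣ z - b).card := Finset.card_pos.2 ⟨a, hmem⟩
      omega
    · have hmem : a ∉ X.filter fun z => b < z ∧ p ^ L ∣ z - b := by
        simp only [mem_filter]; tauto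
      rw [hset, Finset.erase_eq_of_notMem hmem, if_neg hd]
      rfl
  rw [hEE] at h2
  have := hCC
  push_cast [← hCC] at *
  omega

lemma div_sub_mul (m a k : ℕ) (hm : 0 < m) (h : k * m ≤ a) :
    (a - k * m) / m = a / m - k := by
  have hkm : k * m = m * k := by ring
  have h1 : (a - k * m) + m * k = a := by omega
  have h2 : ((a - k * m) + m * k) / m = (a - k * m) / m + k := Nat.add_mul_div_left _ _ hm
  rw [h1] at h2
  rw [h2, Nat.add_sub_cancel]

/-- division drop with indicator, `d ≤ m` -/

lemma div_sub_ind (m a d : ℕ) (hm : 0 < m) (hd : d ≤ a) (hdm : d ≤ m) :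
    a / m = (a - d) / m + (if a % m < d then 1 else 0) := by
  have hqr : m * (a / m) + a % m = a := Nat.div_add_mod a m
  have hrm : a % m < m := Nat.mod_lt _ hm
  set q := a / m with hq
  set r := a % m with hr
  by_cases hc : r < d
  · have hq1 : 1 ≤ q := by
      rcases Nat.eq_zero_or_pos q with h0 | h1
      · rw [h0] at hqr; omega
      · exact h1
    have he : a - d = (m + r - d) + m * (q - 1) := by
      have h5 : m * (q - 1) + m = m * q := by
        have h6 : q - 1 + 1 = q := by omega
        calc m * (q-1) + m = m * (q - 1 + 1) := by ring
        _ = m * q := by rw [h6]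
      omega
    rw [if_pos hc, he, Nat.add_mul_div_left _ _ hm, Nat.div_eq_of_lt (by omega)]
    omega
  · have he : a - d = (r - d) + m * q := by omega
    rw [if_neg hc, he, Nat.add_mul_div_left _ _ hm, Nat.div_eq_of_lt (by omega)]
    omega

/-- moving a bead down within its residue class -/

lemma hL_move_same (hp : 1 < p) (L : ℕ) (X : Finset ℕ) (a d k : ℕ) (ha : a ∈ X)
    (hb : a - d ∉ X) (hd : d ≤ a) (hdk : d = k * p ^ L) (hk : 0 < k) :
    (hL p L (insert (a - d) (X.erase a)) : ℤ) = hL p L X - k := by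
  have hm0 : 0 < p ^ L := ppos hp L
  have hd0 : 0 < d := hdk ▸ Nat.mul_pos hk hm0
  have hmove := hL_move (p := p) L X a (a - d) ha hb (by omega)
  have hcomm : p ^ L * k = k * p ^ L := by ring
  have hdvd : p ^ L ∣ a - (a - d) := ⟨k, by omega⟩
  rw [if_pos hdvd] at hmove
  have hECa := EC hp L X a
  have hECb := EC hp L X (a - d)
  rw [if_pos ha] at hECa
  rw [if_neg hb] at hECb
  have hnn : nn p L X (a - d) = nn p L X a := by
    apply nn_congr
    exact (Nat.modEq_iff_dvd' (by omega)).2 ⟨k, by omega⟩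

  have hdiv : (a - d) / p ^ L = a / p ^ L - k := by
    rw [hdk]; exact div_sub_mul _ _ _ hm0 (by omega)
  have hkle : k ≤ a / p ^ L := by
    rw [Nat.le_div_iff_mul_le hm0]; omega
  rw [hmove]
  have hnn' : (nn p L X (a - d) : ℤ) = nn p L X a := by exact_mod_cast congrArg Nat.cast hnn
  have hdiv' : (((a - d) / p ^ L : ℕ) : ℤ) = ((a / p ^ L : ℕ) : ℤ) - (k : ℤ) := by
    rw [hdiv, Nat.cast_sub hkle]
  omega

lemma exists_move (hp : 1 < p) (K : ℕ) (W : Finset ℕ) (h : 0 < hL p K W) :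
    ∃ a ∈ W, p ^ K ≤ a ∧ a - p ^ K ∉ W := by
  classical
  have hm0 : 0 < p ^ K := ppos hp K
  rw [hL_eq] at h
  obtain ⟨x, hx, hEx⟩ : ∃ x ∈ W, 0 < EE p K W x := by
    by_contra hcon
    push_neg at hcon
    have : ∑ x ∈ W, EE p K W x = 0 := Finset.sum_eq_zero (fun x hx => by have := hcon x hx; omega)
    omega
  obtain ⟨y, hy⟩ := Finset.card_pos.1 hEx
  simp only [mem_filter, mem_range] at hy
  obtain ⟨hyx, hyW, hydvd⟩ := hy
  set S := W.filter (fun z => y < z ∧ p ^ K ∣ z - y) with hS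
  have hxS : x ∈ S := by simp only [hS, mem_filter]; exact ⟨hx, hyx, hydvd⟩
  have hSne : S.Nonempty := ⟨x, hxS⟩
  set a := S.min' hSne with haeq
  have haS : a ∈ S := S.min'_mem hSne
  simp only [hS, mem_filter] at haS
  obtain ⟨haW, hya, hda⟩ := haS
  obtain ⟨c, hc⟩ := hda
  have hc1 : 1 ≤ c := by
    rcases Nat.eq_zero_or_pos c with h0 | h1
    · rw [h0] at hc; simp at hc; omega
    · exact h1
  have hpa : p ^ K ≤ a := by
    have : p ^ K * 1 ≤ p ^ K * c := by
      apply Nat.mul_le_mul_left; omega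
    omega
  refine ⟨a, haW, hpa, ?_⟩
  intro hmem
  have hya' : y ≤ a - p ^ K := by
    have : p ^ K * 1 ≤ p ^ K * c := by apply Nat.mul_le_mul_left; omega
    omega
  rcases Nat.eq_or_lt_of_le hya' with heq | hlt
  · exact hyW (heq ▸ hmem)
  · have hin : a - p ^ K ∈ S := by
      simp only [hS, mem_filter]
      refine ⟨hmem, hlt, ⟨c - 1, ?_⟩⟩
      have : p ^ K * (c - 1) + p ^ K = p ^ K * c := by
        have h1 : c - 1 + 1 = c := by omega
        calc p ^ K * (c - 1) + p ^ K = p ^ K * (c - 1 + 1) := by ring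
        _ = p ^ K * c := by rw [h1]
      omega
    have := S.min'_le _ hin
    omega

/-- the fundamental inequality `p·h_{L+1} ≤ h_L`. -/

lemma hL_ineq_aux (hp : 1 < p) (L : ℕ) :
    ∀ n, ∀ W : Finset ℕ, hL p (L + 1) W ≤ n → p * hL p (L + 1) W ≤ hL p L W := by
  classical
  intro n
  induction n with
  | zero =>
    intro W h
    have h0 : hL p (L + 1) W = 0 := by omega
    rw [h0]; simp
  | succ n ih =>
    intro W h
    rcases Nat.eq_zero_or_pos (hL p (L + 1) W) with h0 | hpos
    · rw [h0]; simp
    · obtain ⟨a, haW, hpa, hnot⟩ := exists_move hp (L + 1) W hpos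
      set Y := insert (a - p ^ (L + 1)) (W.erase a) with hY
      have e1 : (hL p (L + 1) Y : ℤ) = hL p (L + 1) W - 1 := by
        apply hL_move_same hp (L + 1) W a _ 1 haW hnot hpa (by ring) (by omega)
      have e2 : (hL p L Y : ℤ) = hL p L W - p := by
        apply hL_move_same hp L W a _ p haW hnot hpa (by rw [pow_succ]; ring) (by omega)
      have ih' := ih Y (by omega)
      have hpW : p * hL p (L + 1) W = p * hL p (L + 1) Y + p := by
        have h7 : hL p (L + 1) Y + 1 = hL p (L + 1) W := by omega
        rw [← h7]; ring
      omega

lemma hL_ineq (hp : 1 < p) (W : Finset ℕ) (L : ℕ) : p * hL p (L + 1) W ≤ hL p L W :=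
  hL_ineq_aux hp L (hL p (L + 1) W) W le_rfl

lemma tN_cast (hp : 1 < p) (W : Finset ℕ) (L : ℕ) :
    (tN p L W : ℤ) = hL p L W - p * hL p (L + 1) W := by
  have h := hL_ineq hp W L
  unfold tN
  push_cast [Nat.cast_sub h]
  ring

lemma mod_mul_decomp (m c z : ℕ) : z % (m * c) = m * (z / m % c) + z % m := by
  have h1 := Nat.div_add_mod (z % (m * c)) m
  have h2 : z % (m * c) / m = z / m % c := Nat.mod_mul_right_div_self z m c
  have h3 : z % (m * c) % m = z % m := Nat.mod_mod_of_dvd z ⟨c, rfl⟩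
  rw [h2, h3] at h1
  omega

lemma pow_succ_eq (L : ℕ) : p ^ (L + 1) = p ^ L * p := pow_succ p L

/-- splitting a `p^L`-class into its `p^(L+1)`-subclasses -/

lemma nn_split_children (hp : 1 < p) (L : ℕ) (X : Finset ℕ) (v : ℕ) :
    nn p L X v = ∑ j ∈ Finset.range p, nn p (L + 1) X (v % p ^ L + j * p ^ L) := by
  classical
  set m := p ^ L with hm
  have hm0 : 0 < m := ppos hp L
  have hmp : p ^ (L + 1) = m * p := pow_succ_eq L
  have base : nn p L X v = (X.filter fun z => z % m = v % m).card := rfl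
  rw [base]
  rw [Finset.card_eq_sum_card_fiberwise
    (f := fun z => z / m % p) (t := Finset.range p)
    (fun z _ => Finset.mem_range.2 (Nat.mod_lt _ (by omega)))]
  apply Finset.sum_congr rfl
  intro j hj
  have hjp : j < p := Finset.mem_range.1 hj
  have hlt : v % m + j * m < m * p := by
    have h1 : v % m < m := Nat.mod_lt _ hm0
    have h2 : j * m + m ≤ p * m := by
      have := Nat.mul_le_mul_right m (show j + 1 ≤ p by omega)
      calc j * m + m = (j + 1) * m := by ring
      _ ≤ p * m := this
    have h3 : p * m = m * p := by ring
    omega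
  have hnn : nn p (L + 1) X (v % m + j * m) =
      (X.filter fun z => z % (m * p) = v % m + j * m).card := by
    unfold nn
    rw [hmp, Nat.mod_eq_of_lt hlt]
  rw [hnn]
  rw [Finset.filter_filter]
  congr 1
  ext z
  simp only [Finset.mem_filter]
  constructor
  · rintro ⟨hz, h1, h2⟩
    refine ⟨hz, ?_⟩
    rw [mod_mul_decomp, h1, h2]
    ring
  · rintro ⟨hz, h⟩
    have hd := mod_mul_decomp m p z
    rw [h] at hd
    -- hd : v % m + j * m = m * (z / m % p) + z % m
    have hzm : z % m < m := Nat.mod_lt _ hm0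
    have hvm : v % m < m := Nat.mod_lt _ hm0
    have e1 : (v % m + j * m) % m = v % m := by
      rw [Nat.add_mul_mod_self_right, Nat.mod_eq_of_lt hvm]
    have e2 : (m * (z / m % p) + z % m) % m = z % m := by
      rw [Nat.mul_add_mod, Nat.mod_eq_of_lt hzm]
    rw [hd] at e1
    rw [e2] at e1
    -- e1 : z % m = v % m
    refine ⟨hz, e1, ?_⟩
    have : m * (z / m % p) = m * j := by
      have hjm : j * m = m * j := by ring
      omega
    exact Nat.eq_of_mul_eq_mul_left hm0 this

lemma ind_split (hp : 1 < p) (L d : ℕ) (v : ℕ) (hd0 : 0 < d) (hd : d ≤ p ^ L) :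
    ∑ j ∈ Finset.range p, ind p (L + 1) d (v % p ^ L + j * p ^ L) = ind p L d v := by
  set m := p ^ L with hm
  have hm0 : 0 < m := ppos hp L
  have hmp : p ^ (L + 1) = m * p := pow_succ_eq L
  have hterm : ∀ j, j < p → ind p (L + 1) d (v % m + j * m)
      = if j = 0 ∧ v % m < d then 1 else 0 := by
    intro j hjp
    unfold ind
    have hvm : v % m < m := Nat.mod_lt _ hm0
    have hlt : v % m + j * m < m * p := by
      have h2 : (j + 1) * m ≤ p * m := Nat.mul_le_mul_right m (by omega)
      have h3 : (j+1) * m = j * m + m := by ring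
      have h4 : p * m = m * p := by ring
      omega
    rw [hmp, Nat.mod_eq_of_lt hlt]
    rcases Nat.eq_zero_or_pos j with rfl | hj1
    · simp only [Nat.zero_mul, Nat.add_zero, true_and]
    · have hjm : m ≤ j * m := Nat.le_mul_of_pos_left m hj1
      rw [if_neg (by omega), if_neg (by omega)]
  rw [Finset.sum_congr rfl (fun j hj => hterm j (Finset.mem_range.1 hj))]
  have hsplit : ∀ j ∈ Finset.range p, (if j = 0 ∧ v % m < d then (1:ℕ) else 0)
      = if j = 0 then (if v % m < d then 1 else 0) else 0 := by
    intro j _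
    by_cases h1 : j = 0 <;> by_cases h2 : v % m < d <;> simp [h1, h2]
  rw [Finset.sum_congr rfl hsplit, Finset.sum_ite_eq' (Finset.range p) 0,
    if_pos (Finset.mem_range.2 (by omega))]
  rfl

lemma nn_split_nb (hp : 1 < p) (L d : ℕ) (X : Finset ℕ) (r : ℕ) (hd0 : 0 < d)
    (hd : d ≤ p ^ L) (hvm : r < p ^ L) :
    ∑ j ∈ Finset.range p, nn p (L + 1) X ((r + j * p ^ L) + (p ^ (L + 1) - d))
      = nn p L X (r + (p ^ L - d)) := by
  classical
  set m := p ^ L with hm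
  have hm0 : 0 < m := ppos hp L
  have hmp : p ^ (L + 1) = m * p := pow_succ_eq L
  have hp0 : 0 < p := by omega
  have hmmp : m ≤ m * p := Nat.le_mul_of_pos_right m hp0
  rw [nn_split_children hp L X (r + (m - d))]
  by_cases hc : d ≤ r
  · -- no borrow : (r + (m-d)) % m = r - d
    have hr' : (r + (m - d)) % m = r - d := by
      have h1 : r + (m - d) = (r - d) + m := by omega
      rw [h1, Nat.add_mod_right, Nat.mod_eq_of_lt (by omega)]
    rw [hr']
    apply Finset.sum_congr rfl
    intro j hj
    have hjp : j < p := Finset.mem_range.1 hj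
    apply nn_congr
    rw [hmp]
    have hjm : j * m + m ≤ p * m := by
      have h2 := Nat.mul_le_mul_right m (show j + 1 ≤ p by omega)
      have h3 : (j + 1) * m = j * m + m := by ring
      omega
    have h4 : p * m = m * p := by ring
    have he : r + j * m + (m * p - d) = (r - d + j * m) + m * p := by omega
    rw [he, Nat.add_mod_right, Nat.mod_eq_of_lt (by omega)]
  · -- borrow case : (r + (m-d)) % m = r + (m - d)
    push_neg at hc
    have hr' : (r + (m - d)) % m = r + (m - d) := Nat.mod_eq_of_lt (by omega)
    rw [hr']
    have hterm : ∀ j < p, nn p (L + 1) X ((r + j * m) + (p ^ (L + 1) - d))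
        = nn p (L + 1) X (r + (m - d) + (if j = 0 then p - 1 else j - 1) * m) := by
      intro j hjp
      apply nn_congr
      rw [hmp]
      rcases Nat.eq_zero_or_pos j with rfl | hj1
      · rw [if_pos rfl]
        have h5 : (p - 1) * m + m = p * m := by
          have h6 : p - 1 + 1 = p := by omega
          calc (p - 1) * m + m = (p - 1 + 1) * m := by ring
          _ = p * m := by rw [h6]
        have h4 : p * m = m * p := by ring
        have hbase : r + 0 * m + (m * p - d) = r + (m - d) + (p - 1) * m := by omega
        rw [hbase]
      · rw [if_neg (by omega)]
        have h7 : (j - 1) * m + m = j * m := by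
          have h8 : j - 1 + 1 = j := by omega
          calc (j - 1) * m + m = (j - 1 + 1) * m := by ring
          _ = j * m := by rw [h8]
        have hjm : j * m + m ≤ p * m := by
          have h2 := Nat.mul_le_mul_right m (show j + 1 ≤ p by omega)
          have h3 : (j + 1) * m = j * m + m := by ring
          omega
        have h4 : p * m = m * p := by ring
        have he : r + j * m + (m * p - d) = (r + (m - d) + (j - 1) * m) + m * p := by omega
        rw [he, Nat.add_mod_right, Nat.mod_eq_of_lt (by omega)]
    rw [Finset.sum_congr rfl (fun j hj => hterm j (Finset.mem_range.1 hj))]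
    apply Finset.sum_nbij' (i := fun j => if j = 0 then p - 1 else j - 1)
      (j := fun j => if j = p - 1 then 0 else j + 1)
    · intro a ha; simp only [Finset.mem_range] at *; split <;> omega
    · intro a ha; simp only [Finset.mem_range] at *; split <;> omega
    · intro a ha; simp only [Finset.mem_range] at ha; split <;> split <;> omega
    · intro a ha; simp only [Finset.mem_range] at ha; split <;> split <;> omega
    · intro a ha; rfl

/-- pigeonhole extension step -/

lemma QQ_step (hp : 1 < p) (L d : ℕ) (X : Finset ℕ) (hd0 : 0 < d) (hd : d ≤ p ^ L) (c : ℕ)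
    (hQ : QQ p L d X c) : ∃ j < p, QQ p (L + 1) d X (c % p ^ L + j * p ^ L) := by
  by_contra hcon
  push_neg at hcon
  have hterm : ∀ j ∈ Finset.range p, nn p (L + 1) X (c % p ^ L + j * p ^ L)
      ≤ nn p (L + 1) X ((c % p ^ L + j * p ^ L) + (p ^ (L + 1) - d))
        + ind p (L + 1) d (c % p ^ L + j * p ^ L) := by
    intro j hj
    have h9 := hcon j (Finset.mem_range.1 hj)
    unfold QQ at h9
    omega
  have hsum := Finset.sum_le_sum hterm
  rw [← nn_split_children hp L X c] at hsum
  rw [Finset.sum_add_distrib,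
    nn_split_nb hp L d X (c % p ^ L) hd0 hd (Nat.mod_lt _ (ppos hp L)),
    ind_split hp L d c hd0 hd] at hsum
  have hbridge : nn p L X (c % p ^ L + (p ^ L - d)) = nn p L X (c + (p ^ L - d)) := by
    apply nn_congr
    exact Nat.ModEq.add_right _ (Nat.mod_mod_of_dvd c (dvd_refl _))
  rw [hbridge] at hsum
  unfold QQ at hQ
  omega

/-- the `ind_split` lemma is stated with base `v`; bridge for `c % p^L` base -/

lemma QQ_congr (L d : ℕ) (X : Finset ℕ) {c c' : ℕ} (h : c % p ^ L = c' % p ^ L) :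
    QQ p L d X c ↔ QQ p L d X c' := by
  unfold QQ ind
  rw [h, nn_congr p L X h, nn_congr p L X (Nat.ModEq.add_right (p ^ L - d) h)]

/-- the ladder -/

lemma QQ_ladder (hp : 1 < p) (d M : ℕ) (X : Finset ℕ) (hd0 : 0 < d) (hd : d ≤ p ^ (M + 1))
    (base : ∃ c, QQ p (M + 1) d X c) :
    ∀ K, ∃ c, ∀ L, M + 1 ≤ L → L ≤ M + 1 + K → QQ p L d X c := by
  intro K
  induction K with
  | zero =>
    obtain ⟨c, hc⟩ := base
    exact ⟨c, fun L h1 h2 => by have h3 : L = M + 1 := by omega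
                                rw [h3]; exact hc⟩
  | succ K ih =>
    obtain ⟨c, hc⟩ := ih
    have htop : QQ p (M + 1 + K) d X c := hc _ (by omega) (by omega)
    have hdle : d ≤ p ^ (M + 1 + K) := le_trans hd (Nat.pow_le_pow_right (by omega) (by omega))
    obtain ⟨j, hjp, hQ'⟩ := QQ_step hp (M + 1 + K) d X hd0 hdle c htop
    set c' := c % p ^ (M + 1 + K) + j * p ^ (M + 1 + K) with hc'
    refine ⟨c', fun L h1 h2 => ?_⟩
    rcases Nat.lt_or_ge L (M + 1 + K + 1) with hL | hL
    · have hmod : c' % p ^ L = c % p ^ L := by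
        have h3 : c' % p ^ (M + 1 + K) = c % p ^ (M + 1 + K) := by
          rw [hc', Nat.add_mul_mod_self_right]
          exact Nat.mod_mod_of_dvd c (dvd_refl _)
        have hdvd : p ^ L ∣ p ^ (M + 1 + K) := pow_dvd_pow p (by omega)
        exact Nat.ModEq.of_dvd hdvd h3
      exact (QQ_congr L d X hmod).mpr (hc L h1 (by omega))
    · have hLeq : L = M + 1 + K + 1 := by omega
      rw [hLeq]
      exact hQ'

lemma stair_ineq {p : ℕ} (hp : 1 < p) (m : ℕ → ℕ)
    (hdec : ∀ s, 1 ≤ s → s < p → m s ≤ m (s - 1)) (hwrap : m 0 ≤ m (p - 1) + 1) :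
    2 * (∑ s ∈ Finset.range p, s * m s) + p * (∑ s ∈ Finset.range p, m s * (m s - 1))
      ≤ (∑ s ∈ Finset.range p, m s) * ((∑ s ∈ Finset.range p, m s) - 1) := by
  classical
  -- monotonicity
  have hmono : ∀ s k, s + k < p → m (s + k) ≤ m s := by
    intro s k
    induction k with
    | zero => intro _; simp
    | succ k ih =>
      intro h
      have h1 : m (s + k + 1) ≤ m (s + k) := by
        have := hdec (s + k + 1) (by omega) (by omega)
        simpa using this
      have h2 := ih (by omega)
      calc m (s + (k + 1)) = m (s + k + 1) := by ring_nf
      _ ≤ m (s + k) := h1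
      _ ≤ m s := h2
  have hmono' : ∀ s s', s ≤ s' → s' < p → m s' ≤ m s := by
    intro s s' h h'
    have := hmono s (s' - s) (by omega)
    rwa [show s + (s' - s) = s' by omega] at this
  set q := m (p - 1) with hqdef
  have hq : ∀ s, s < p → q ≤ m s := fun s hs => hmono' s (p - 1) (by omega) (by omega)
  have hq1 : ∀ s, s < p → m s ≤ q + 1 := fun s hs =>
    le_trans (hmono' 0 s (by omega) hs) hwrap
  set r := ∑ s ∈ Finset.range p, (m s - q) with hrdef
  have hrp : r ≤ p := by
    rw [hrdef]
    calc ∑ s ∈ Finset.range p, (m s - q) ≤ ∑ s ∈ Finset.range p, 1 := by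
          apply Finset.sum_le_sum
          intro s hs
          have := hq1 s (Finset.mem_range.1 hs)
          have := hq s (Finset.mem_range.1 hs)
          omega
    _ = p := by simp
  have hval : ∀ s, s < p → m s = q + (if s < r then 1 else 0) := by
    intro s hs
    by_cases he : q + 1 ≤ m s
    · have hsr : s < r := by
        have hsub : Finset.range (s + 1) ⊆ Finset.range p := by
          apply Finset.range_subset_range.2; omega
        have h1 : ∑ s' ∈ Finset.range (s + 1), 1 ≤ ∑ s' ∈ Finset.range (s + 1), (m s' - q) := by
          apply Finset.sum_le_sum
          intro s' hs'
          have h7 := Finset.mem_range.1 hs'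
          have h3 : m s ≤ m s' := hmono' s' s (by omega) hs
          omega
        have h2 : ∑ s' ∈ Finset.range (s + 1), (m s' - q) ≤ r := by
          rw [hrdef]; exact Finset.sum_le_sum_of_subset hsub
        simp only [Finset.sum_const, Finset.card_range, smul_eq_mul, mul_one] at h1
        omega
      rw [if_pos hsr]
      have := hq1 s hs
      omega
    · have he' : m s = q := by have := hq s hs; omega
      have hrs : r ≤ s := by
        have hsplit : r = ∑ s' ∈ Finset.Ico 0 s, (m s' - q) + ∑ s' ∈ Finset.Ico s p, (m s' - q) := by
          rw [hrdef, Finset.range_eq_Ico,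
            ← Finset.sum_Ico_consecutive _ (Nat.zero_le s) (by omega : s ≤ p)]
        have hzero : ∑ s' ∈ Finset.Ico s p, (m s' - q) = 0 := by
          apply Finset.sum_eq_zero
          intro s' hs'
          have h4 := Finset.mem_Ico.1 hs'
          have h5 : m s' ≤ m s := hmono' s s' h4.1 h4.2
          omega
        have hle : ∑ s' ∈ Finset.Ico 0 s, (m s' - q) ≤ ∑ s' ∈ Finset.Ico 0 s, 1 := by
          apply Finset.sum_le_sum
          intro s' hs'
          have h6 := Finset.mem_Ico.1 hs'
          have := hq1 s' (by omega)
          have := hq s' (by omega)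
          omega
        simp only [Finset.sum_const, Nat.card_Ico, smul_eq_mul, mul_one, Nat.sub_zero] at hle
        omega
      rw [he', if_neg (by omega)]
      omega
  -- now evaluate the three sums
  have hite1 : ∑ s ∈ Finset.range p, (if s < r then (1:ℕ) else 0) = r := by
    have h1 : ∀ s ∈ Finset.range p, (m s - q) = (if s < r then (1:ℕ) else 0) := by
      intro s hs
      have := hval s (Finset.mem_range.1 hs)
      by_cases h : s < r <;> simp [h] at this ⊢ <;> omega
    rw [← Finset.sum_congr rfl h1, ← hrdef]
  have e2 : (∑ s ∈ Finset.range p, m s) = p * q + r := by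
    have h1 : ∀ s ∈ Finset.range p, m s = q + (if s < r then 1 else 0) :=
      fun s hs => hval s (Finset.mem_range.1 hs)
    rw [Finset.sum_congr rfl h1, Finset.sum_add_distrib, hite1, Finset.sum_const,
      Finset.card_range, smul_eq_mul]
  have e1 : (∑ s ∈ Finset.range p, s * m s)
      = q * (∑ s ∈ Finset.range p, s) + ∑ s ∈ Finset.range r, s := by
    have h1 : ∀ s ∈ Finset.range p, s * m s = q * s + (if s < r then s else 0) := by
      intro s hs
      rw [hval s (Finset.mem_range.1 hs)]
      by_cases h : s < r <;> simp [h] <;> ring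
    rw [Finset.sum_congr rfl h1, Finset.sum_add_distrib, ← Finset.mul_sum]
    congr 1
    rw [← Finset.sum_subset (Finset.range_subset_range.2 hrp)
      (fun x _ hx => if_neg (by simp only [Finset.mem_range] at hx; omega))]
    apply Finset.sum_congr rfl
    intro s hs
    exact if_pos (Finset.mem_range.1 hs)
  have e3 : (∑ s ∈ Finset.range p, m s * (m s - 1))
      = r * ((q + 1) * q) + (p - r) * (q * (q - 1)) := by
    have h1 : ∀ s ∈ Finset.range p, m s * (m s - 1)
        = (if s < r then (q + 1) * q else q * (q - 1)) := by
      intro s hs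
      rw [hval s (Finset.mem_range.1 hs)]
      by_cases h : s < r <;> simp [h]
    rw [Finset.sum_congr rfl h1, Finset.sum_ite, Finset.sum_const, Finset.sum_const]
    have hf1 : (Finset.range p).filter (fun s => s < r) = Finset.range r := by
      ext x
      simp only [Finset.mem_filter, Finset.mem_range]
      omega
    have hf2 : ((Finset.range p).filter (fun s => ¬ s < r)).card = p - r := by
      have h8 := Finset.card_filter_add_card_filter_not
        (s := Finset.range p) (p := fun s => s < r)
      rw [hf1, Finset.card_range, Finset.card_range] at h8
      omega
    rw [hf1, hf2, Finset.card_range, smul_eq_mul, smul_eq_mul]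
  have hS2 : (∑ s ∈ Finset.range p, s) * 2 = p * (p - 1) := Finset.sum_range_id_mul_two p
  have hT2 : (∑ s ∈ Finset.range r, s) * 2 = r * (r - 1) := Finset.sum_range_id_mul_two r
  rw [e1, e2, e3]
  set S := ∑ s ∈ Finset.range p, s with hSdef
  set T := ∑ s ∈ Finset.range r, s with hTdef
  rcases Nat.eq_zero_or_pos q with hq0 | hq0
  · rw [hq0]
    simp
    omega
  · have h9 : 1 ≤ p * q := Nat.one_le_iff_ne_zero.2 (Nat.mul_ne_zero (by omega) (by omega))
    have hS2' : ((S : ℤ)) * 2 = p * ((p : ℤ) - 1) := by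
      have := congrArg (Nat.cast : ℕ → ℤ) hS2
      push_cast [Nat.cast_sub (show 1 ≤ p by omega)] at this
      linarith
    have hT2' : ((T : ℤ)) * 2 = r * ((r : ℤ) - 1) := by
      rcases Nat.eq_zero_or_pos r with hr0 | hr0
      · rw [hr0]; simp [hTdef, hr0]
      · have := congrArg (Nat.cast : ℕ → ℤ) hT2
        push_cast [Nat.cast_sub (show 1 ≤ r by omega)] at this
        linarith
    zify [hrp, hq0, show 1 ≤ p * q + r by omega]
    apply le_of_eq
    linear_combination (q : ℤ) * hS2' + hT2'

lemma hL_PP (hp : 1 < p) (L : ℕ) (X : Finset ℕ) :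
    hL p L X + PP p L X = ∑ x ∈ X, x / p ^ L := by
  rw [hL_eq, PP, ← Finset.sum_add_distrib]
  exact Finset.sum_congr rfl (fun x _ => EE_add_BB hp L X x)

lemma pairs_twice (S : Finset ℕ) : 2 * pairs S = S.card * (S.card - 1) := by
  classical
  have hA : pairs S = ∑ x ∈ S, ∑ y ∈ S, (if y < x then (1:ℕ) else 0) := by
    unfold pairs
    exact Finset.sum_congr rfl (fun x _ => Finset.card_filter _ _)
  have hAA' : ∑ x ∈ S, ∑ y ∈ S, (if y < x then (1:ℕ) else 0)
      = ∑ x ∈ S, ∑ y ∈ S, (if x < y then (1:ℕ) else 0) := Finset.sum_comm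
  have htri : ∀ x ∈ S, ∑ y ∈ S, ((if y < x then (1:ℕ) else 0) + ((if x < y then 1 else 0)
      + (if y = x then 1 else 0))) = ∑ y ∈ S, 1 := by
    intro x _
    apply Finset.sum_congr rfl
    intro y _
    rcases lt_trichotomy x y with h | h | h
    · simp [h, not_lt.2 (le_of_lt h), Ne.symm (ne_of_lt h)]
    · simp [h]
    · simp [h, not_lt.2 (le_of_lt h), ne_of_lt h]
  have hdiag : ∀ x ∈ S, ∑ y ∈ S, (if y = x then (1:ℕ) else 0) = 1 := by
    intro x hx
    rw [Finset.sum_ite_eq' S x (fun _ => (1:ℕ)), if_pos hx]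
  have htot : ∑ x ∈ S, ∑ y ∈ S, ((if y < x then (1:ℕ) else 0) + ((if x < y then 1 else 0)
      + (if y = x then 1 else 0))) = S.card * S.card := by
    rw [Finset.sum_congr rfl htri]
    simp [Finset.sum_const, mul_comm]
  have hexp : ∑ x ∈ S, ∑ y ∈ S, ((if y < x then (1:ℕ) else 0) + ((if x < y then 1 else 0)
      + (if y = x then 1 else 0)))
      = (∑ x ∈ S, ∑ y ∈ S, (if y < x then (1:ℕ) else 0))
       + ((∑ x ∈ S, ∑ y ∈ S, (if x < y then (1:ℕ) else 0)) + S.card) := by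
    have hx : ∀ x ∈ S, ∑ y ∈ S, ((if y < x then (1:ℕ) else 0) + ((if x < y then 1 else 0)
        + (if y = x then 1 else 0)))
        = (∑ y ∈ S, (if y < x then (1:ℕ) else 0)) + ((∑ y ∈ S, (if x < y then (1:ℕ) else 0)) + 1) := by
      intro x hxS
      rw [Finset.sum_add_distrib, Finset.sum_add_distrib, hdiag x hxS]
    rw [Finset.sum_congr rfl hx, Finset.sum_add_distrib, Finset.sum_add_distrib,
      Finset.sum_const, smul_eq_mul, mul_one]
  have hkey : 2 * pairs S + S.card = S.card * S.card := by
    rw [hA]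
    omega
  have hfin : S.card * (S.card - 1) + S.card = S.card * S.card := by
    cases S.card with
    | zero => simp
    | succ n => simp [Nat.mul_succ, Nat.succ_mul]
  omega

lemma BB_cls (p L : ℕ) (X : Finset ℕ) (x : ℕ) :
    BB p L X x = ((cls p L X (x % p ^ L)).filter (· < x)).card := by
  unfold BB cls
  rw [Finset.filter_filter]
  congr 1
  ext z
  simp only [Finset.mem_filter]
  constructor
  · rintro ⟨hz, h1, h2⟩
    exact ⟨hz, (Nat.modEq_iff_dvd' (by omega)).2 h2, h1⟩
  · rintro ⟨hz, h1, h2⟩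
    exact ⟨hz, h2, (Nat.modEq_iff_dvd' (by omega)).1 h1⟩

lemma PP_fiber (hp : 1 < p) (L : ℕ) (X : Finset ℕ) :
    PP p L X = ∑ c ∈ Finset.range (p ^ L), pairs (cls p L X c) := by
  classical
  unfold PP
  rw [← Finset.sum_fiberwise_of_maps_to (g := fun x => x % p ^ L) (t := Finset.range (p ^ L))
    (fun x _ => Finset.mem_range.2 (Nat.mod_lt _ (ppos hp L))) (BB p L X)]
  apply Finset.sum_congr rfl
  intro c _
  unfold pairs
  have hset : X.filter (fun x => x % p ^ L = c) = cls p L X c := rfl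
  rw [hset]
  apply Finset.sum_congr rfl
  intro x hx
  have hxc : x % p ^ L = c := (Finset.mem_filter.1 hx).2
  rw [BB_cls, hxc]

/-- regrouping a sum over `range (m * k)` -/

lemma sum_range_mul {A : Type*} [AddCommMonoid A] (m k : ℕ) (hm : 0 < m) (f : ℕ → A) :
    ∑ c ∈ Finset.range (m * k), f c = ∑ r ∈ Finset.range m, ∑ s ∈ Finset.range k, f (r + s * m) := by
  classical
  rw [← Finset.sum_product']
  apply Finset.sum_nbij' (i := fun c => (c % m, c / m)) (j := fun rs => rs.1 + rs.2 * m)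
  · intro c hc
    simp only [Finset.mem_range, Finset.mem_product] at *
    refine ⟨Nat.mod_lt _ hm, ?_⟩
    rw [Nat.div_lt_iff_lt_mul hm]
    have h5 : m * k = k * m := by ring
    omega
  · intro rs hrs
    simp only [Finset.mem_range, Finset.mem_product] at *
    obtain ⟨h1, h2⟩ := hrs
    have h3 : (rs.2 + 1) * m ≤ k * m := Nat.mul_le_mul_right m (by omega)
    have h4 : (rs.2 + 1) * m = rs.2 * m + m := by ring
    have h5 : m * k = k * m := by ring
    omega
  · intro c hc
    dsimp only
    have h6 := Nat.mod_add_div c m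
    have h7 : m * (c / m) = (c / m) * m := by ring
    omega
  · intro rs hrs
    simp only [Finset.mem_range, Finset.mem_product] at hrs
    have h8 : (rs.1 + rs.2 * m) % m = rs.1 := by
      rw [Nat.add_mul_mod_self_right, Nat.mod_eq_of_lt hrs.1]
    have h9 : (rs.1 + rs.2 * m) / m = rs.2 := by
      rw [Nat.add_mul_div_right _ _ hm, Nat.div_eq_of_lt hrs.1]
      omega
    ext <;> simp [h8, h9]
  · intro c hc
    dsimp only
    have h6 := Nat.mod_add_div c m
    have h7 : m * (c / m) = (c / m) * m := by ring
    congr 1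
    omega

/-- digit sums over a parent class -/

lemma dg_fiber (hp : 1 < p) (M : ℕ) (X : Finset ℕ) (r : ℕ) (hr : r < p ^ M) :
    ∑ x ∈ cls p M X r, (x / p ^ M % p)
      = ∑ s ∈ Finset.range p, s * nn p (M + 1) X (r + s * p ^ M) := by
  classical
  set m := p ^ M with hm
  have hm0 : 0 < m := ppos hp M
  have hmp : p ^ (M + 1) = m * p := pow_succ p M
  rw [← Finset.sum_fiberwise_of_maps_to (g := fun x => x / m % p) (t := Finset.range p)
    (fun x _ => Finset.mem_range.2 (Nat.mod_lt _ (by omega))) (fun x => x / m % p)]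
  apply Finset.sum_congr rfl
  intro s hs
  have hsp : s < p := Finset.mem_range.1 hs
  have hfib : (cls p M X r).filter (fun x => x / m % p = s)
      = X.filter (fun z => z % p ^ (M + 1) = (r + s * m) % p ^ (M + 1)) := by
    unfold cls
    rw [Finset.filter_filter]
    have hlt : r + s * m < m * p := by
      have h2 : (s + 1) * m ≤ p * m := Nat.mul_le_mul_right m (by omega)
      have h3 : (s + 1) * m = s * m + m := by ring
      have h4 : p * m = m * p := by ring
      omega
    ext z
    simp only [Finset.mem_filter]
    rw [hmp, Nat.mod_eq_of_lt hlt]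
    constructor
    · rintro ⟨hz, h1, h2⟩
      refine ⟨hz, ?_⟩
      rw [mod_mul_decomp, h1, h2]
      ring
    · rintro ⟨hz, hzz⟩
      have hd := mod_mul_decomp m p z
      rw [hzz] at hd
      have hzm : z % m < m := Nat.mod_lt _ hm0
      have e1 : (r + s * m) % m = r := by
        rw [Nat.add_mul_mod_self_right, Nat.mod_eq_of_lt hr]
      have e2 : (m * (z / m % p) + z % m) % m = z % m := by
        rw [Nat.mul_add_mod, Nat.mod_eq_of_lt hzm]
      rw [hd] at e1
      rw [e2] at e1
      refine ⟨hz, e1, ?_⟩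
      have h5 : m * (z / m % p) = m * s := by
        have h6 : s * m = m * s := by ring
        omega
      exact Nat.eq_of_mul_eq_mul_left hm0 h5
  rw [hfib]
  have hconst : ∀ x ∈ X.filter (fun z => z % p ^ (M + 1) = (r + s * m) % p ^ (M + 1)),
      x / m % p = s := by
    intro x hx
    have hxx := (Finset.mem_filter.1 hx).2
    have hlt : r + s * m < m * p := by
      have h2 : (s + 1) * m ≤ p * m := Nat.mul_le_mul_right m (by omega)
      have h3 : (s + 1) * m = s * m + m := by ring
      have h4 : p * m = m * p := by ring
      omega
    rw [hmp, Nat.mod_eq_of_lt hlt] at hxx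
    have hd := mod_mul_decomp m p x
    rw [hxx] at hd
    have hxm : x % m < m := Nat.mod_lt _ hm0
    have h5 : m * (x / m % p) = m * s := by
      have h6 : s * m = m * s := by ring
      have e1 : (r + s * m) % m = r := by
        rw [Nat.add_mul_mod_self_right, Nat.mod_eq_of_lt hr]
      have e2 : (m * (x / m % p) + x % m) % m = x % m := by
        rw [Nat.mul_add_mod, Nat.mod_eq_of_lt hxm]
      rw [hd] at e1
      rw [e2] at e1
      omega
    exact Nat.eq_of_mul_eq_mul_left hm0 h5
  rw [Finset.sum_congr rfl hconst, Finset.sum_const, smul_eq_mul]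
  have hcard : (X.filter (fun z => z % p ^ (M + 1) = (r + s * m) % p ^ (M + 1))).card
      = nn p (M + 1) X (r + s * m) := rfl
  rw [hcard, mul_comm]

lemma base_case (hp : 1 < p) (M : ℕ) (X : Finset ℕ)
    (hne : p * hL p (M + 1) X < hL p M X) : ∃ c, QQ p (M + 1) (p ^ M) X c := by
  classical
  by_contra hcon
  push_neg at hcon
  suffices h : hL p M X ≤ p * hL p (M + 1) X by omega
  set m := p ^ M with hm
  have hm0 : 0 < m := ppos hp M
  have hmp : p ^ (M + 1) = m * p := pow_succ p M
  have hparent : ∀ r ∈ Finset.range m,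
      (∑ x ∈ cls p M X r, (x / m % p))
        + p * (∑ s ∈ Finset.range p, pairs (cls p (M + 1) X (r + s * m)))
        ≤ pairs (cls p M X r) := by
    intro r hr
    have hrm : r < m := Finset.mem_range.1 hr
    set mf : ℕ → ℕ := fun s => nn p (M + 1) X (r + s * m) with hmf
    have hlt : ∀ s, s < p → r + s * m < m * p := by
      intro s hs
      have h2 : (s + 1) * m ≤ p * m := Nat.mul_le_mul_right m (by omega)
      have h3 : (s + 1) * m = s * m + m := by ring
      have h4 : p * m = m * p := by ring
      omega
    have hcardc : ∀ s, s < p → (cls p (M + 1) X (r + s * m)).card = mf s := by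
      intro s hs
      simp only [hmf]
      unfold cls nn
      rw [hmp, Nat.mod_eq_of_lt (hlt s hs)]
    have hcardp : (cls p M X r).card = ∑ s ∈ Finset.range p, mf s := by
      have h1 : nn p M X r = (cls p M X r).card := by
        unfold nn cls
        rw [Nat.mod_eq_of_lt hrm]
      have h2 := nn_split_children hp M X r
      rw [Nat.mod_eq_of_lt hrm] at h2
      rw [← h1, h2]
    have hdec : ∀ s, 1 ≤ s → s < p → mf s ≤ mf (s - 1) := by
      intro s h1 h2
      have hq := hcon (r + s * m)
      unfold QQ at hq
      have hind : ind p (M + 1) m (r + s * m) = 0 := by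
        unfold ind
        rw [hmp, Nat.mod_eq_of_lt (hlt s h2)]
        have h5 : 1 * m ≤ s * m := Nat.mul_le_mul_right m h1
        rw [if_neg (by omega)]
      have hnb : nn p (M + 1) X (r + s * m + (p ^ (M + 1) - m)) = mf (s - 1) := by
        simp only [hmf]
        apply nn_congr
        rw [hmp]
        have h3 : (s - 1) * m + m = s * m := by
          have h8 : s - 1 + 1 = s := by omega
          calc (s - 1) * m + m = (s - 1 + 1) * m := by ring
          _ = s * m := by rw [h8]
        have h4 : m ≤ m * p := Nat.le_mul_of_pos_right m (by omega)
        have he : r + s * m + (m * p - m) = (r + (s - 1) * m) + m * p := by omega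
        rw [he, Nat.add_mod_right, Nat.mod_eq_of_lt (hlt (s - 1) (by omega))]
      rw [hind, hnb] at hq
      simp only [hmf] at hq ⊢
      omega
    have hwrap : mf 0 ≤ mf (p - 1) + 1 := by
      have hq := hcon (r + 0 * m)
      unfold QQ at hq
      have hind : ind p (M + 1) m (r + 0 * m) = 1 := by
        unfold ind
        rw [hmp, Nat.mod_eq_of_lt (hlt 0 (by omega))]
        rw [if_pos (by omega)]
      have hnb : nn p (M + 1) X (r + 0 * m + (p ^ (M + 1) - m)) = mf (p - 1) := by
        simp only [hmf]
        apply nn_congr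
        rw [hmp]
        have h3 : (p - 1) * m + m = p * m := by
          have h8 : p - 1 + 1 = p := by omega
          calc (p - 1) * m + m = (p - 1 + 1) * m := by ring
          _ = p * m := by rw [h8]
        have h4 : m ≤ m * p := Nat.le_mul_of_pos_right m (by omega)
        have h9 : p * m = m * p := by ring
        have he : r + 0 * m + (m * p - m) = r + (p - 1) * m := by omega
        rw [he, Nat.mod_eq_of_lt (hlt (p - 1) (by omega))]
      rw [hind, hnb] at hq
      simp only [hmf] at hq ⊢
      omega
    have hst := stair_ineq hp mf hdec hwrap
    have hdg := dg_fiber hp M X r hrm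
    have e2 : 2 * pairs (cls p M X r)
        = (∑ s ∈ Finset.range p, mf s) * ((∑ s ∈ Finset.range p, mf s) - 1) := by
      rw [pairs_twice, hcardp]
    have e3 : 2 * (∑ s ∈ Finset.range p, pairs (cls p (M + 1) X (r + s * m)))
        = ∑ s ∈ Finset.range p, mf s * (mf s - 1) := by
      rw [Finset.mul_sum]
      exact Finset.sum_congr rfl (fun s hs => by
        rw [pairs_twice, hcardc s (Finset.mem_range.1 hs)])
    have e4 : p * (2 * (∑ s ∈ Finset.range p, pairs (cls p (M + 1) X (r + s * m))))
        = 2 * (p * (∑ s ∈ Finset.range p, pairs (cls p (M + 1) X (r + s * m)))) := by ring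
    have h5 : 2 * (∑ x ∈ cls p M X r, (x / m % p))
        + p * (2 * (∑ s ∈ Finset.range p, pairs (cls p (M + 1) X (r + s * m))))
        ≤ 2 * pairs (cls p M X r) := by
      rw [hdg, e3, e2]
      exact hst
    rw [e4] at h5
    omega
  have hsum := Finset.sum_le_sum hparent
  have hdgtot : ∑ x ∈ X, (x / m % p) = ∑ r ∈ Finset.range m, ∑ x ∈ cls p M X r, (x / m % p) :=
    (Finset.sum_fiberwise_of_maps_to (g := fun x => x % m)
      (fun x _ => Finset.mem_range.2 (Nat.mod_lt _ hm0)) _).symm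
  have hPP1 : PP p (M + 1) X
      = ∑ r ∈ Finset.range m, ∑ s ∈ Finset.range p, pairs (cls p (M + 1) X (r + s * m)) := by
    rw [PP_fiber hp (M + 1) X, hmp, sum_range_mul m p hm0]
  have hPPM : PP p M X = ∑ r ∈ Finset.range m, pairs (cls p M X r) := PP_fiber hp M X
  have hkey : (∑ x ∈ X, (x / m % p)) + p * PP p (M + 1) X ≤ PP p M X := by
    rw [hPP1, Finset.mul_sum, hPPM, hdgtot, ← Finset.sum_add_distrib]
    exact hsum
  have I1 := hL_PP hp M X
  rw [← hm] at I1
  have I2 := hL_PP hp (M + 1) X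
  have I3 : ∑ x ∈ X, x / m = p * (∑ x ∈ X, x / p ^ (M + 1)) + ∑ x ∈ X, (x / m % p) := by
    rw [Finset.mul_sum, ← Finset.sum_add_distrib]
    apply Finset.sum_congr rfl
    intro x _
    have hdd : x / p ^ (M + 1) = x / m / p := by rw [hmp, Nat.div_div_eq_div_mul]
    rw [hdd]
    have h6 := Nat.div_add_mod (x / m) p
    omega
  have I2' : p * hL p (M + 1) X + p * PP p (M + 1) X = p * ∑ x ∈ X, x / p ^ (M + 1) := by
    rw [← Nat.mul_add, I2]
  omega

lemma hL_zero (p L : ℕ) (W : Finset ℕ) (h : ∀ z ∈ W, z < p ^ L) : hL p L W = 0 := by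
  rw [hL_eq]
  apply Finset.sum_eq_zero
  intro x hx
  unfold EE
  rw [Finset.card_eq_zero]
  rw [Finset.filter_eq_empty_iff]
  intro y hy
  simp only [Finset.mem_range] at hy
  rintro ⟨-, k, hk⟩
  have hx' := h x hx
  have hk1 : 1 ≤ k := by
    rcases Nat.eq_zero_or_pos k with rfl | h1
    · simp at hk; omega
    · exact h1
  have : p ^ L * 1 ≤ p ^ L * k := Nat.mul_le_mul_left _ hk1
  omega

/-- the `Δ` formula at cross levels -/

lemma delta_eq (hp : 1 < p) (L : ℕ) (X : Finset ℕ) (a d : ℕ) (ha : a ∈ X) (hda : d ≤ a)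
    (hnd : a - d ∉ X) (hdm : d ≤ p ^ L) (hndvd : ¬ p ^ L ∣ d) (hd0 : 0 < d) :
    (hL p L (insert (a - d) (X.erase a)) : ℤ) - hL p L X
      = (nn p L X a : ℤ) - nn p L X (a - d) - 1 - (if a % p ^ L < d then 1 else 0) := by
  have hmove := hL_move (p := p) L X a (a - d) ha hnd (by omega)
  have hsub : a - (a - d) = d := by omega
  rw [hsub, if_neg hndvd] at hmove
  have hECa := EC hp L X a
  have hECb := EC hp L X (a - d)
  rw [if_pos ha] at hECa
  rw [if_neg hnd] at hECb
  have hdiv := div_sub_ind (p ^ L) a d (ppos hp L) hda hdm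
  have hdiv' : ((a / p ^ L : ℕ) : ℤ)
      = ((a - d) / p ^ L : ℕ) + (if a % p ^ L < d then (1:ℤ) else 0) := by
    rw [hdiv]
    push_cast
    split <;> simp
  rw [hmove]
  rw [hdiv'] at hECa
  omega

/-- `QQ` at level `L` for the chosen bead gives `Δ_L ≥ 0` -/

lemma delta_nonneg (hp : 1 < p) (L : ℕ) (X : Finset ℕ) (a d : ℕ) (ha : a ∈ X) (hda : d ≤ a)
    (hnd : a - d ∉ X) (hdm : d ≤ p ^ L) (hndvd : ¬ p ^ L ∣ d) (hd0 : 0 < d)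
    (hQ : QQ p L d X a) :
    (hL p L X : ℤ) ≤ hL p L (insert (a - d) (X.erase a)) := by
  have hdelta := delta_eq hp L X a d ha hda hnd hdm hndvd hd0
  unfold QQ ind at hQ
  have hnb : nn p L X (a + (p ^ L - d)) = nn p L X (a - d) := by
    apply nn_congr
    have he : a + (p ^ L - d) = (a - d) + p ^ L := by omega
    rw [he, Nat.add_mod_right]
  rw [hnb] at hQ
  by_cases hc : a % p ^ L < d <;> simp only [hc, if_true, if_false] at hdelta hQ <;> omega

end S14

open S14 in
theorem stmt14 (p : ℕ) (hp : 1 < p) (X : Finset ℕ) (hnt : 0 < hL p 0 X)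
    (M : ℕ) (hM0 : ∀ L < M, tN p L X = 0) (hM : tN p M X ≠ 0) :
    ∃ x ∈ X, p ^ M ≤ x ∧ x - p ^ M ∉ X ∧
      Int.ModEq (p : ℤ) (tN p M (insert (x - p ^ M) (X.erase x)) : ℤ)
        ((tN p M X : ℤ) - 1) ∧
      Succeq (fun L => tN p (M + 1 + L) (insert (x - p ^ M) (X.erase x)))
        (fun L => tN p (M + 1 + L) X) := by
  classical
  have hd0 : 0 < p ^ M := ppos hp M
  have hdd1 : p ^ M ≤ p ^ (M + 1) := Nat.pow_le_pow_right (by omega) (by omega)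
  have hMlt : p * hL p (M + 1) X < hL p M X := by
    unfold tN at hM; omega
  obtain ⟨c0, hc0⟩ := base_case hp M X hMlt
  set V := X.sup id with hV
  have hVle : ∀ z ∈ X, z ≤ V := fun z hz => Finset.le_sup (f := id) hz
  set Λ := M + 1 + (V + p ^ M) with hΛ
  have hΛpow : V + p ^ M < p ^ Λ := by
    have h1 : Λ < p ^ Λ := Nat.lt_pow_self hp
    omega
  obtain ⟨c, hc⟩ := QQ_ladder hp (p ^ M) M X hd0 hdd1 ⟨c0, hc0⟩ (V + p ^ M)
  have hQΛ : QQ p Λ (p ^ M) X c := hc Λ (by omega) (by omega)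
  have hzid : ∀ z ∈ X, z % p ^ Λ = z :=
    fun z hz => Nat.mod_eq_of_lt (by have := hVle z hz; omega)
  have hnn_le : ∀ v : ℕ, nn p Λ X v ≤ 1 := by
    intro v
    unfold nn
    have hsub : X.filter (fun z => z % p ^ Λ = v % p ^ Λ) ⊆ {v % p ^ Λ} := by
      intro z hz
      rw [Finset.mem_filter] at hz
      rw [Finset.mem_singleton]
      exact (hzid z hz.1).symm.trans hz.2
    calc (X.filter (fun z => z % p ^ Λ = v % p ^ Λ)).card
        ≤ ({v % p ^ Λ} : Finset ℕ).card := Finset.card_le_card hsub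
    _ = 1 := Finset.card_singleton _
  have hQΛ' := hQΛ
  unfold QQ at hQΛ'
  have hpos : 0 < nn p Λ X c := by omega
  obtain ⟨a, ha⟩ := Finset.card_pos.1 hpos
  rw [Finset.mem_filter] at ha
  obtain ⟨haX, hamod⟩ := ha
  have haeq : a = c % p ^ Λ := (hzid a haX).symm.trans hamod
  have hnbC := hnn_le c
  have hind0 : ind p Λ (p ^ M) c = 0 := by
    unfold ind at hQΛ' ⊢
    by_cases h : c % p ^ Λ < p ^ M
    · rw [if_pos h] at hQΛ'; omega
    · rw [if_neg h]
  have hnb0 : nn p Λ X (c + (p ^ Λ - p ^ M)) = 0 := by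
    rw [hind0] at hQΛ'; omega
  have had : p ^ M ≤ a := by
    unfold ind at hind0
    rw [← haeq] at hind0
    by_cases h : a < p ^ M
    · rw [if_pos h] at hind0; omega
    · omega
  have haV : a ≤ V := hVle a haX
  have hndX : a - p ^ M ∉ X := by
    intro hmem
    have hmod : (c + (p ^ Λ - p ^ M)) % p ^ Λ = a - p ^ M := by
      have h1 : (c + (p ^ Λ - p ^ M)) % p ^ Λ
          = (c % p ^ Λ + (p ^ Λ - p ^ M)) % p ^ Λ :=
        (Nat.ModEq.add_right _ (Nat.mod_mod_of_dvd c (dvd_refl _))).symm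
      have h2 : c % p ^ Λ + (p ^ Λ - p ^ M) = (a - p ^ M) + p ^ Λ := by
        rw [← haeq]; omega
      rw [h1, h2, Nat.add_mod_right, Nat.mod_eq_of_lt (by omega)]
    have : a - p ^ M ∈ X.filter (fun z => z % p ^ Λ = (c + (p ^ Λ - p ^ M)) % p ^ Λ) := by
      rw [Finset.mem_filter, hmod]
      exact ⟨hmem, Nat.mod_eq_of_lt (by omega)⟩
    have h3 : 0 < nn p Λ X (c + (p ^ Λ - p ^ M)) := Finset.card_pos.2 ⟨_, this⟩
    omega
  have hQa : ∀ L, M + 1 ≤ L → QQ p L (p ^ M) X a := by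
    intro L hL1
    rcases le_or_gt L Λ with hLΛ | hLΛ
    · have hcL := hc L hL1 (by omega)
      refine (QQ_congr L (p ^ M) X (show c % p ^ L = a % p ^ L from ?_)).mp hcL
      have hdvd : p ^ L ∣ p ^ Λ := pow_dvd_pow p (by omega)
      have h4 : a % p ^ L = c % p ^ Λ % p ^ L := by rw [haeq]
      rw [h4, Nat.mod_mod_of_dvd c hdvd]
    · have hPL : p ^ Λ ≤ p ^ L := Nat.pow_le_pow_right (by omega) (by omega)
      unfold QQ
      have hza : a % p ^ L = a := Nat.mod_eq_of_lt (by omega)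
      have hmem : a ∈ X.filter (fun z => z % p ^ L = a % p ^ L) :=
        Finset.mem_filter.2 ⟨haX, rfl⟩
      have hnn1 : 1 ≤ nn p L X a := Finset.card_pos.2 ⟨a, hmem⟩
      have hnb0' : nn p L X (a + (p ^ L - p ^ M)) = 0 := by
        unfold nn
        rw [Finset.card_eq_zero, Finset.filter_eq_empty_iff]
        intro z hz heq
        have hmod : (a + (p ^ L - p ^ M)) % p ^ L = a - p ^ M := by
          have he : a + (p ^ L - p ^ M) = (a - p ^ M) + p ^ L := by omega
          rw [he, Nat.add_mod_right, Nat.mod_eq_of_lt (by omega)]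
        rw [hmod, Nat.mod_eq_of_lt (show z < p ^ L by have := hVle z hz; omega)] at heq
        exact hndX (heq ▸ hz)
      have hind0' : ind p L (p ^ M) a = 0 := by
        unfold ind
        rw [hza]
        exact if_neg (by omega)
      omega
  refine ⟨a, haX, had, hndX, ?_, ?_⟩
  · have hmoveM : (hL p M (insert (a - p ^ M) (X.erase a)) : ℤ) = hL p M X - 1 :=
      hL_move_same hp M X a (p ^ M) 1 haX hndX had (by ring) (by omega)
    have hdif : ((tN p M X : ℤ) - 1) - (tN p M (insert (a - p ^ M) (X.erase a)) : ℤ)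
        = p * ((hL p (M + 1) (insert (a - p ^ M) (X.erase a)) : ℤ) - hL p (M + 1) X) := by
      rw [tN_cast hp _ M, tN_cast hp _ M, hmoveM]
      ring
    exact Int.modEq_iff_dvd.mpr ⟨_, hdif⟩
  · set Y := insert (a - p ^ M) (X.erase a) with hY
    have hYle : ∀ z ∈ Y, z ≤ V := by
      intro z hz
      rw [hY, Finset.mem_insert] at hz
      rcases hz with rfl | hz
      · omega
      · exact hVle z (Finset.mem_of_mem_erase hz)
    have hzero : ∀ L, Λ ≤ L → hL p L Y = 0 ∧ hL p L X = 0 := by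
      intro L hL1
      have hPL : p ^ Λ ≤ p ^ L := Nat.pow_le_pow_right (by omega) (by omega)
      exact ⟨hL_zero p L Y (fun z hz => by have := hYle z hz; omega),
        hL_zero p L X (fun z hz => by have := hVle z hz; omega)⟩
    have hΔ : ∀ L, M + 1 ≤ L → hL p L X ≤ hL p L Y := by
      intro L hL1
      have hdm : p ^ M ≤ p ^ L := Nat.pow_le_pow_right (by omega) (by omega)
      have hlt2 : p ^ M < p ^ (M + 1) := Nat.pow_lt_pow_right hp (by omega)
      have hPL : p ^ (M + 1) ≤ p ^ L := Nat.pow_le_pow_right (by omega) (by omega)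
      have hndvd : ¬ p ^ L ∣ p ^ M := by
        intro hdvd
        have := Nat.le_of_dvd hd0 hdvd
        omega
      have := delta_nonneg hp L X a (p ^ M) haX had hndX hdm hndvd hd0 (hQa L hL1)
      exact_mod_cast this
    by_cases hall : ∀ L, M + 1 ≤ L → hL p L Y = hL p L X
    · left
      funext L
      show tN p (M + 1 + L) Y = tN p (M + 1 + L) X
      unfold tN
      rw [hall (M + 1 + L) (by omega), hall (M + 1 + L + 1) (by omega)]
    · right
      push_neg at hall
      set S := (Finset.range (Λ + 1)).filter (fun L => M + 1 ≤ L ∧ hL p L Y ≠ hL p L X) with hS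
      have hSne : S.Nonempty := by
        obtain ⟨L0, hL0, hne⟩ := hall
        refine ⟨L0, ?_⟩
        rw [hS, Finset.mem_filter, Finset.mem_range]
        refine ⟨?_, hL0, hne⟩
        by_contra hbig
        push_neg at hbig
        have := hzero L0 (by omega)
        omega
      set N := S.max' hSne with hN
      have hNmem : N ∈ S := S.max'_mem hSne
      rw [hS, Finset.mem_filter, Finset.mem_range] at hNmem
      obtain ⟨hNΛ, hNM, hNne⟩ := hNmem
      have hgt : ∀ L, N < L → hL p L Y = hL p L X := by
        intro L hLN
        rcases le_or_gt L Λ with h1 | h1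
        · by_cases h2 : M + 1 ≤ L
          · by_contra hne2
            have hmem : L ∈ S := by
              rw [hS, Finset.mem_filter, Finset.mem_range]
              exact ⟨by omega, h2, hne2⟩
            have := S.le_max' L hmem
            omega
          · omega
        · have := hzero L (by omega)
          omega
      refine ⟨N - (M + 1), ?_, ?_⟩
      · show tN p (M + 1 + (N - (M + 1))) X < tN p (M + 1 + (N - (M + 1))) Y
        have hn1 : M + 1 + (N - (M + 1)) = N := by omega
        simp only [hn1]
        have hΔN1 : hL p (N + 1) Y = hL p (N + 1) X := hgt (N + 1) (by omega)
        have hle := hΔ N hNM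
        have hZ : (tN p N X : ℤ) < tN p N Y := by
          rw [tN_cast hp _ N, tN_cast hp _ N, hΔN1]
          have h7 : hL p N X < hL p N Y := by omega
          have h8 : ((hL p N X : ℤ)) < hL p N Y := by exact_mod_cast h7
          omega
        exact_mod_cast hZ
      · intro L hLL
        show tN p (M + 1 + L) Y = tN p (M + 1 + L) X
        unfold tN
        rw [hgt (M + 1 + L) (by omega), hgt (M + 1 + L + 1) (by omega)]
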